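/- With G(t,q) = ∏_{k≥1} ∏_{j=0}^{4} (1 - (-t)^{2k-2+j} q^k)^{(-1)^{j+1} b_j} ∈ ℤ[[t,q]] and b_0 = 1, for every n ≥ 2 the coefficient of t^2 q^n in G(t,q) equals b_2 + binomial(b_1, 2) + 1. -/

import Mathlib

open PowerSeries Finset

/-- The ring `ℤ[[t]][[q]] = ℤ[[t,q]]`; the inner variable is `t`, the outer is `q`. -/
abbrev TQ : Type := PowerSeries (PowerSeries ℤ)

/-- `t` as an element of `ℤ[[t]]`. -/
noncomputable abbrev tVar : PowerSeries ℤ := PowerSeries.X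

/-- The factor `1 - (-t)^(2k-2+j) q^k` of Göttsche's product, as a unit of
`ℤ[[t,q]]`; here `k ≥ 1` is indexed by `k+1`, so the exponent `2k-2+j` becomes
`2k+j`. -/
noncomputable def gFactor (k j : ℕ) : TQˣ where
  val := 1 - PowerSeries.C ((-tVar) ^ (2 * k + j)) * X ^ (k + 1)
  inv := PowerSeries.invOfUnit
    (1 - PowerSeries.C ((-tVar) ^ (2 * k + j)) * X ^ (k + 1)) 1
  val_inv := PowerSeries.mul_invOfUnit _ 1 (by simp)
  inv_val := by
    rw [mul_comm]
    exact PowerSeries.mul_invOfUnit _ 1 (by simp)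

/-- The partial product over `1 ≤ k ≤ N` of Göttsche's generating function
`G(t,q) = ∏_{k≥1} ∏_{j=0}^{4} (1 - (-t)^{2k-2+j} q^k)^{(-1)^{j+1} b_j}`.
Factors with `k > n` do not change the coefficient of `q^n`, so coefficients of
`G` are read off from these partial products. -/
noncomputable def gPart (b0 b1 b2 b3 b4 N : ℕ) : TQˣ :=
  ∏ k ∈ range N,
    (gFactor k 1) ^ b1 * (gFactor k 3) ^ b3 *
      ((gFactor k 0) ^ b0 * (gFactor k 2) ^ b2 * (gFactor k 4) ^ b4)⁻¹



noncomputable abbrev Aq : Type := PowerSeries ℤ ⧸ Ideal.span {(PowerSeries.X : PowerSeries ℤ) ^ 3}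

noncomputable def ψ : PowerSeries ℤ →+* Aq := Ideal.Quotient.mk _

noncomputable def Mq : TQ →+* PowerSeries Aq := PowerSeries.map ψ

noncomputable def Mu : TQˣ →* (PowerSeries Aq)ˣ := Units.map Mq.toMonoidHom

noncomputable def τ : Aq := ψ tVar

lemma tau_cube : τ ^ 3 = 0 := by
  rw [τ, ← map_pow, ψ, Ideal.Quotient.eq_zero_iff_mem]
  exact Ideal.subset_span rfl

lemma gFactor_map (k j : ℕ) :
    (Mu (gFactor k j) : PowerSeries Aq)
      = 1 - PowerSeries.C ((-τ) ^ (2 * k + j)) * X ^ (k + 1) := by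
  show Mq ((gFactor k j : TQˣ) : TQ) = _
  rw [gFactor]
  simp only [Mq, map_sub, map_one, map_mul, map_pow, PowerSeries.map_C, PowerSeries.map_X,
    map_neg]
  rfl

lemma gFactor_map_triv (k j : ℕ) (h : 3 ≤ 2 * k + j) : Mu (gFactor k j) = 1 := by
  ext
  rw [gFactor_map]
  have : (-τ) ^ (2 * k + j) = 0 := by
    apply pow_eq_zero_of_le h
    rw [show ((-τ) ^ 3 : Aq) = -(τ^3) by ring, tau_cube, neg_zero]
  simp [this]

lemma gPart_map (b1 b2 b3 b4 N : ℕ) (hN : 2 ≤ N) :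
    Mu (gPart 1 b1 b2 b3 b4 N)
      = Mu (gFactor 0 1) ^ b1 * (Mu (gFactor 0 0) * Mu (gFactor 0 2) ^ b2)⁻¹
        * (Mu (gFactor 1 0))⁻¹ := by
  rw [gPart, map_prod]
  rw [← Finset.prod_subset (Finset.range_subset_range.2 hN) (fun k _ hk => ?_)]
  · rw [Finset.prod_range_succ, Finset.prod_range_one]
    simp only [map_mul, map_pow, map_inv]
    rw [gFactor_map_triv 0 3 (by omega), gFactor_map_triv 0 4 (by omega),
      gFactor_map_triv 1 1 (by omega), gFactor_map_triv 1 2 (by omega),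
      gFactor_map_triv 1 3 (by omega), gFactor_map_triv 1 4 (by omega)]
    group
  · simp only [map_mul, map_pow, map_inv]
    have hk2 : 2 ≤ k := by simp at hk; omega
    rw [gFactor_map_triv k 0 (by omega), gFactor_map_triv k 1 (by omega),
      gFactor_map_triv k 2 (by omega), gFactor_map_triv k 3 (by omega),
      gFactor_map_triv k 4 (by omega)]
    group
lemma one_add_pow_of_cube {R : Type*} [CommRing R] (a : R) (h : a ^ 3 = 0) (m : ℕ) :
    (1 + a) ^ m = 1 + m * a + (m.choose 2) * a ^ 2 := by
  induction m with
  | zero => simp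
  | succ m ih =>
      have hch : (m + 1).choose 2 = m.choose 2 + m := by
        rw [Nat.choose_succ_succ, Nat.choose_one_right, Nat.add_comm]
      rw [pow_succ, ih, hch]
      push_cast
      linear_combination (m.choose 2 : R) * h

lemma one_sub_pow_of_sq {R : Type*} [CommRing R] (a : R) (h : a ^ 2 = 0) (m : ℕ) :
    (1 - a) ^ m = 1 - m * a := by
  have h3 : (-a) ^ 3 = 0 := by
    have : (-a) ^ 3 = (-a) * a ^ 2 := by ring
    rw [this, h, mul_zero]
  have key := one_add_pow_of_cube (-a) h3 m
  rw [show (1 : R) + -a = 1 - a by ring] at key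
  rw [key]
  linear_combination (m.choose 2 : R) * h

noncomputable def pa (b1 b2 : ℕ) : Aq := (b1 : Aq) * τ + (b2 : Aq) * τ ^ 2
noncomputable def pb (b1 : ℕ) : Aq := ((b1.choose 2 : Aq) + 1) * τ ^ 2

noncomputable def Pp (b1 b2 : ℕ) : PowerSeries Aq :=
  1 + PowerSeries.C (pa b1 b2) * X + PowerSeries.C (pb b1) * X ^ 2

noncomputable def Egen (b1 b2 : ℕ) : PowerSeries Aq := Pp b1 b2 * invUnitsSub 1

lemma val00 : (Mu (gFactor 0 0) : PowerSeries Aq) = 1 - X := by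
  rw [gFactor_map]; norm_num

lemma val01 : (Mu (gFactor 0 1) : PowerSeries Aq) = 1 + PowerSeries.C τ * X := by
  rw [gFactor_map]; norm_num; ring

lemma val02 : (Mu (gFactor 0 2) : PowerSeries Aq) = 1 - (PowerSeries.C τ) ^ 2 * X := by
  rw [gFactor_map]; norm_num; ring

lemma val10 : (Mu (gFactor 1 0) : PowerSeries Aq) = 1 - (PowerSeries.C τ) ^ 2 * X ^ 2 := by
  rw [gFactor_map]; norm_num; ring

lemma key_identity (b1 b2 : ℕ) :
    Egen b1 b2 * (Mu (gFactor 1 0) : PowerSeries Aq)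
        * ((Mu (gFactor 0 0) : PowerSeries Aq) * (Mu (gFactor 0 2) : PowerSeries Aq) ^ b2)
      = (Mu (gFactor 0 1) : PowerSeries Aq) ^ b1 := by
  have hC3 : (PowerSeries.C τ) ^ 3 = 0 := by rw [← map_pow, tau_cube, map_zero]
  have hcube : (PowerSeries.C τ * X) ^ 3 = 0 := by rw [mul_pow, hC3, zero_mul]
  have hsq : ((PowerSeries.C τ) ^ 2 * X) ^ 2 = 0 := by
    have : ((PowerSeries.C τ) ^ 2 * (X : PowerSeries Aq)) ^ 2
        = (PowerSeries.C τ) ^ 3 * ((PowerSeries.C τ) * X ^ 2) := by ring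
    rw [this, hC3, zero_mul]
  have hg : invUnitsSub (1 : Aqˣ) * (1 - X) = 1 := by
    simpa using invUnitsSub_mul_sub (1 : Aqˣ)
  rw [val00, val01, val02, val10, one_sub_pow_of_sq _ hsq b2, one_add_pow_of_cube _ hcube b1,
    Egen]
  have rearr : ∀ P A B : PowerSeries Aq,
      P * invUnitsSub 1 * A * ((1 - X) * B) = invUnitsSub 1 * (1 - X) * (P * (A * B)) :=
    fun _ _ _ => by ring
  rw [rearr, hg, one_mul, Pp]
  simp only [pa, pb, map_add, map_mul, map_natCast, map_one, map_pow]
  set u := PowerSeries.C τ with hu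
  set x := (PowerSeries.X : PowerSeries Aq) with hx
  set m1 := (b1 : PowerSeries Aq)
  set m2 := (b2 : PowerSeries Aq)
  set c := ((b1.choose 2 : ℕ) : PowerSeries Aq)
  linear_combination (-m1*x^3 - m2*u*x^3 - (c+1)*u*x^4 - m1*m2*x^2 - m2^2*u*x^2
    - (c+1)*m2*u*x^3 + m2*u*x^3 + m1*m2*u^2*x^4 + m2^2*u^3*x^4 + (c+1)*m2*u^3*x^5) * hC3

lemma map_gPart_val (b1 b2 b3 b4 N : ℕ) (hN : 2 ≤ N) :
    Mq ((gPart 1 b1 b2 b3 b4 N : TQˣ) : TQ) = Egen b1 b2 := by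
  have hunit : Mu (gPart 1 b1 b2 b3 b4 N)
      * (Mu (gFactor 1 0) * (Mu (gFactor 0 0) * Mu (gFactor 0 2) ^ b2))
      = Mu (gFactor 0 1) ^ b1 := by
    rw [gPart_map b1 b2 b3 b4 N hN]; group
  have hval := congrArg (Units.val) hunit
  have hkey := key_identity b1 b2
  simp only [Units.val_mul, Units.val_pow_eq_pow_val, Mu, Units.coe_map,
    RingHom.toMonoidHom_eq_coe, MonoidHom.coe_coe] at hval hkey
  have hz : IsUnit ((Mq ((gFactor 1 0 : TQˣ) : TQ))
      * (Mq ((gFactor 0 0 : TQˣ) : TQ) * (Mq ((gFactor 0 2 : TQˣ) : TQ)) ^ b2)) :=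
    (Mu (gFactor 1 0)).isUnit.mul
      ((Mu (gFactor 0 0)).isUnit.mul ((Mu (gFactor 0 2)).isUnit.pow b2))
  refine (hz.mul_left_inj).mp ?_
  rw [hval, ← hkey]; ring

lemma coeff_Pp_big (b1 b2 i : ℕ) (h0 : i ≠ 0) (h1 : i ≠ 1) (h2 : i ≠ 2) :
    PowerSeries.coeff i (Pp b1 b2) = 0 := by
  simp [Pp, PowerSeries.coeff_one, PowerSeries.coeff_C_mul, PowerSeries.coeff_X,
    PowerSeries.coeff_X_pow, h0, h1, h2]

lemma coeff_Egen (b1 b2 n : ℕ) (hn : 2 ≤ n) :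
    PowerSeries.coeff n (Egen b1 b2) = 1 + pa b1 b2 + pb b1 := by
  rw [Egen, PowerSeries.coeff_mul, Finset.Nat.sum_antidiagonal_eq_sum_range_succ_mk]
  have step1 : ∀ i ∈ range (n + 1),
      PowerSeries.coeff i (Pp b1 b2) * PowerSeries.coeff (n - i) (invUnitsSub 1)
        = PowerSeries.coeff i (Pp b1 b2) := by
    intro i _
    rw [coeff_invUnitsSub, one_pow, divp_one, mul_one]
  rw [Finset.sum_congr rfl step1]
  rw [← Finset.sum_subset (Finset.range_subset_range.2 (by omega : 3 ≤ n + 1))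
    (fun i _ hi => coeff_Pp_big b1 b2 i (by simp at hi; omega) (by simp at hi; omega)
      (by simp at hi; omega))]
  rw [Finset.sum_range_succ, Finset.sum_range_succ, Finset.sum_range_one]
  simp [Pp, PowerSeries.coeff_one, PowerSeries.coeff_C_mul, PowerSeries.coeff_X,
    PowerSeries.coeff_X_pow]


/-- The coefficient of `t^2 q^n` (`n ≥ 2`) in Göttsche's generating function
`G(t,q)` with `b₀ = 1` equals `b₂ + C(b₁,2) + 1`:
`b₂(X^[n]) = b₂(X) + C(b₁(X),2) + 1` for `n ≥ 2`. -/
theorem stmt9 (b1 b2 b3 b4 : ℕ) (n N : ℕ) (hn : 2 ≤ n) (hN : n ≤ N) :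
    PowerSeries.coeff 2
      (PowerSeries.coeff n ((gPart 1 b1 b2 b3 b4 N : TQˣ) : TQ))
      = b2 + Nat.choose b1 2 + 1 := by
  have h2N : 2 ≤ N := le_trans hn hN
  set G : TQ := ((gPart 1 b1 b2 b3 b4 N : TQˣ) : TQ) with hG
  set y : PowerSeries ℤ := 1 + (b1 : PowerSeries ℤ) * X
      + ((b2 + b1.choose 2 + 1 : ℕ) : PowerSeries ℤ) * X ^ 2 with hy
  have hψ : ψ (PowerSeries.coeff n G) = ψ y := by
    have h1 : ψ (PowerSeries.coeff n G)
        = PowerSeries.coeff n (Mq G) := by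
      rw [Mq, PowerSeries.coeff_map]
    rw [h1, hG, map_gPart_val b1 b2 b3 b4 N h2N, coeff_Egen b1 b2 n hn, hy]
    have hX : ψ (PowerSeries.X : PowerSeries ℤ) = τ := rfl
    simp only [map_add, map_one, map_mul, map_natCast, map_pow, hX, pa, pb]
    push_cast
    ring
  have hdvd : (PowerSeries.X : PowerSeries ℤ) ^ 3
      ∣ (PowerSeries.coeff n G - y) := by
    rw [← Ideal.mem_span_singleton, ← Ideal.Quotient.eq_zero_iff_mem]
    show ψ _ = 0
    rw [map_sub, hψ, sub_self]
  have hco := (PowerSeries.X_pow_dvd_iff.mp hdvd) 2 (by omega)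
  rw [map_sub, sub_eq_zero] at hco
  rw [hco, hy]
  have e1 : (PowerSeries.coeff 2) (1 : PowerSeries ℤ) = 0 := by
    simp [PowerSeries.coeff_one]
  have e2 : (PowerSeries.coeff 2) ((b1 : PowerSeries ℤ) * X) = 0 := by
    rw [← map_natCast (PowerSeries.C (R := ℤ)) b1, PowerSeries.coeff_C_mul, PowerSeries.coeff_X]
    simp
  have e3 : (PowerSeries.coeff 2) (((b2 + b1.choose 2 + 1 : ℕ) : PowerSeries ℤ) * X ^ 2)
      = ((b2 + b1.choose 2 + 1 : ℕ) : ℤ) := by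
    rw [← map_natCast (PowerSeries.C (R := ℤ)) (b2 + b1.choose 2 + 1), PowerSeries.coeff_C_mul,
      PowerSeries.coeff_X_pow]
    simp
  rw [map_add, map_add, e1, e2, e3]
  push_cast
  ring
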